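/- Let K_{2,3} denote the complete bipartite graph on vertices {1,2,3,4,5} with parts {1,2} and {3,4,5}. For all real numbers λ₁ < λ₂ < λ₃, there exists a matrix A ∈ S(K_{2,3}) that has the Strong Spectral Property and whose spectrum is the multiset {λ₁, λ₂, λ₂, λ₂, λ₃} (ordered multiplicity list (1,3,1)). -/

import Mathlib

open Matrix

/-- The geometric multiplicity of `lam` as an eigenvalue of `A`:
`dim ker (A - lam • I)`. -/
noncomputable def multOf {m : Type*} [Fintype m] [DecidableEq m]
    (A : Matrix m m ℝ) (lam : ℝ) : ℕ :=
  Module.finrank ℝ (LinearMap.ker (A - lam • (1 : Matrix m m ℝ)).mulVecLin)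

/-- The Strong Spectral Property. -/
def HasSSP {m : Type*} [Fintype m] [DecidableEq m] (A : Matrix m m ℝ) : Prop :=
  ∀ X : Matrix m m ℝ, X.IsSymm → Matrix.hadamard A X = 0 →
    Matrix.hadamard (1 : Matrix m m ℝ) X = 0 → A * X - X * A = 0 → X = 0

/-- `A ∈ S(G)`: `A` is symmetric and its off-diagonal nonzero pattern is given by `G`. -/
def InS {m : Type*} [Fintype m] [DecidableEq m]
    (G : SimpleGraph m) (A : Matrix m m ℝ) : Prop :=
  A.IsSymm ∧ ∀ i j, i ≠ j → (A i j ≠ 0 ↔ G.Adj i j)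


/-- The complete bipartite graph `K_{2,3}` on vertices `{0,1,2,3,4}` with
parts `{0,1}` and `{2,3,4}`. -/
def bip23 : SimpleGraph (Fin 5) :=
  SimpleGraph.fromRel fun i j => i.val ≤ 1 ∧ 2 ≤ j.val

noncomputable def Amat (l2 u1 u2 v1 v2 c : ℝ) : Matrix (Fin 5) (Fin 5) ℝ :=
  l2 • (1 : Matrix (Fin 5) (Fin 5) ℝ)
    + vecMulVec ![u1,u2,c,c,c] ![u1,u2,c,c,c]
    - vecMulVec ![v1,v2,c,c,c] ![v1,v2,c,c,c]

lemma Amat_apply (l2 u1 u2 v1 v2 c : ℝ) (i j : Fin 5) :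
    Amat l2 u1 u2 v1 v2 c i j
      = l2 * (if i = j then 1 else 0) + ![u1,u2,c,c,c] i * ![u1,u2,c,c,c] j
        - ![v1,v2,c,c,c] i * ![v1,v2,c,c,c] j := by
  simp only [Amat, Matrix.sub_apply, Matrix.add_apply, Matrix.smul_apply,
    Matrix.one_apply, vecMulVec_apply, smul_eq_mul, mul_ite, mul_one, mul_zero]

lemma Amat_isSymm (l2 u1 u2 v1 v2 c : ℝ) : (Amat l2 u1 u2 v1 v2 c).IsSymm := by
  ext i j
  rw [Matrix.transpose_apply, Amat_apply, Amat_apply]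
  rcases eq_or_ne i j with h | h
  · simp [h]
  · simp [h, Ne.symm h]; ring

lemma pattern (l2 u1 u2 v1 v2 c : ℝ)
    (h1 : u1*u2 = v1*v2) (hc : c ≠ 0) (hm0 : u1 ≠ v1) (hm1 : u2 ≠ v2) :
    ∀ i j, i ≠ j → (Amat l2 u1 u2 v1 v2 c i j ≠ 0 ↔ bip23.Adj i j) := by
  have k0 : c * (u1 - v1) ≠ 0 := mul_ne_zero hc (sub_ne_zero.mpr hm0)
  have k1 : c * (u2 - v2) ≠ 0 := mul_ne_zero hc (sub_ne_zero.mpr hm1)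
  intro i j hij
  fin_cases i <;> fin_cases j <;>
    simp [Amat_apply, bip23, SimpleGraph.fromRel] <;>
    first
      | decide
      | omega
      | (exact fun h => k0 (by linear_combination h))
      | (exact fun h => k1 (by linear_combination h))
      | (exact iff_of_true (fun h => k0 (by linear_combination h)) (by decide))
      | (exact iff_of_true (fun h => k1 (by linear_combination h)) (by decide))
      | linear_combination h1
      | linear_combination -h1
      | (exact iff_of_false (fun h => h (by linear_combination h1)) (by decide))
      | (exact iff_of_false (fun h => h (by linear_combination -h1)) (by decide))


lemma Amat_ssp (l2 u1 u2 v1 v2 c : ℝ) (hc : c ≠ 0) (hm0 : u1 ≠ v1) (hm1 : u2 ≠ v2)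
    (hne : (u1-v1)^2 ≠ (u2-v2)^2) : HasSSP (Amat l2 u1 u2 v1 v2 c) := by
  have k0c : u1 * c - v1 * c ≠ 0 := by
    intro h; exact hm0 (by
      have := mul_eq_zero.1 (show (u1 - v1) * c = 0 by linear_combination h)
      rcases this with h' | h'
      · linarith [sub_eq_zero.1 h']
      · exact absurd h' hc)
  have k1c : u2 * c - v2 * c ≠ 0 := by
    intro h; exact hm1 (by
      have := mul_eq_zero.1 (show (u2 - v2) * c = 0 by linear_combination h)
      rcases this with h' | h'
      · linarith [sub_eq_zero.1 h']
      · exact absurd h' hc)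
  intro X hsym hAX h1X hcomm
  have hX : ∀ i j : Fin 5, Amat l2 u1 u2 v1 v2 c i j ≠ 0 → X i j = 0 := by
    intro i j hA
    have := congrFun (congrFun hAX i) j
    simp [Matrix.hadamard_apply] at this
    rcases this with h | h
    · exact absurd h hA
    · exact h
  have hD : ∀ i : Fin 5, X i i = 0 := by
    intro i
    have := congrFun (congrFun h1X i) i
    simpa [Matrix.hadamard_apply, Matrix.one_apply] using this
  have hs : ∀ i j : Fin 5, X j i = X i j := fun i j => congrFun (congrFun hsym i) j
  have z02 : X 0 2 = 0 := hX 0 2 (by rw [Amat_apply]; simpa using k0c)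
  have z03 : X 0 3 = 0 := hX 0 3 (by rw [Amat_apply]; simpa using k0c)
  have z04 : X 0 4 = 0 := hX 0 4 (by rw [Amat_apply]; simpa using k0c)
  have z12 : X 1 2 = 0 := hX 1 2 (by rw [Amat_apply]; simpa using k1c)
  have z13 : X 1 3 = 0 := hX 1 3 (by rw [Amat_apply]; simpa using k1c)
  have z14 : X 1 4 = 0 := hX 1 4 (by rw [Amat_apply]; simpa using k1c)
  have z20 : X 2 0 = 0 := (hs 0 2).trans z02
  have z30 : X 3 0 = 0 := (hs 0 3).trans z03
  have z40 : X 4 0 = 0 := (hs 0 4).trans z04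
  have z21 : X 2 1 = 0 := (hs 1 2).trans z12
  have z31 : X 3 1 = 0 := (hs 1 3).trans z13
  have z41 : X 4 1 = 0 := (hs 1 4).trans z14
  have d0 := hD 0; have d1 := hD 1; have d2 := hD 2; have d3 := hD 3; have d4 := hD 4
  have s01 := hs 0 1; have s23 := hs 2 3; have s24 := hs 2 4; have s34 := hs 3 4
  have E02 := congrFun (congrFun hcomm 0) 2
  have E03 := congrFun (congrFun hcomm 0) 3
  have E04 := congrFun (congrFun hcomm 0) 4
  have E12 := congrFun (congrFun hcomm 1) 2
  simp [Matrix.sub_apply, Matrix.mul_apply, Fin.sum_univ_five, Amat_apply,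
    z02, z20, z03, z30, z04, z40, z12, z21, z13, z31, z14, z41,
    d0, d1, d2, d3, d4, s01, s23, s24, s34] at E02 E03 E04 E12
  -- E02 : (u1c-v1c)*(X23 + X24) - X01*(u2c-v2c) = 0  (shape to confirm)
  have hpq : X 2 4 = X 3 4 := mul_left_cancel₀ k0c (by linear_combination E02 - E03)
  have hbq : X 2 3 = X 3 4 := mul_left_cancel₀ k0c (by linear_combination E02 - E04)
  rw [hpq, hbq] at E02 E12
  have hq : X 3 4 = 0 := by
    have key : X 3 4 * (2*c*((u1-v1)^2 - (u2-v2)^2)) = 0 := by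
      linear_combination (u1 - v1) * E02 - (u2 - v2) * E12
    rcases mul_eq_zero.1 key with h | h
    · exact h
    · exact absurd h (mul_ne_zero (mul_ne_zero two_ne_zero hc) (sub_ne_zero.mpr hne))
  rw [hq] at E02
  have ha : X 0 1 = 0 := by
    have h5 : X 0 1 * (u2 * c - v2 * c) = 0 := by linear_combination -E02
    rcases mul_eq_zero.1 h5 with h | h
    · exact h
    · exact absurd h k1c
  have hb : X 2 3 = 0 := hbq.trans hq
  have hp : X 2 4 = 0 := hpq.trans hq
  ext i j
  fin_cases i <;> fin_cases j <;>
    simp_all [hs 0 1, hs 2 3, hs 2 4, hs 3 4, hs 0 2, hs 0 3, hs 0 4, hs 1 2, hs 1 3, hs 1 4]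


lemma vmv_mulVec (x y w : Fin 5 → ℝ) : vecMulVec x y *ᵥ w = (y ⬝ᵥ w) • x := by
  funext i
  simp [vecMulVec_apply, Matrix.mulVec, dotProduct, Finset.mul_sum, Finset.sum_mul,
    mul_comm, mul_assoc, mul_left_comm]

lemma Amat_mulVec (l2 u1 u2 v1 v2 c t : ℝ) (w : Fin 5 → ℝ) :
    (Amat l2 u1 u2 v1 v2 c - t • (1 : Matrix (Fin 5) (Fin 5) ℝ)) *ᵥ w
      = (l2 - t) • w + (![u1,u2,c,c,c] ⬝ᵥ w) • ![u1,u2,c,c,c]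
        - (![v1,v2,c,c,c] ⬝ᵥ w) • ![v1,v2,c,c,c] := by
  have h : Amat l2 u1 u2 v1 v2 c - t • (1 : Matrix (Fin 5) (Fin 5) ℝ)
      = (l2 - t) • (1 : Matrix (Fin 5) (Fin 5) ℝ)
        + vecMulVec ![u1,u2,c,c,c] ![u1,u2,c,c,c]
        - vecMulVec ![v1,v2,c,c,c] ![v1,v2,c,c,c] := by
    unfold Amat; module
  rw [h, Matrix.sub_mulVec, Matrix.add_mulVec, Matrix.smul_mulVec,
    Matrix.one_mulVec, vmv_mulVec, vmv_mulVec]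

section
variable (l1 l2 l3 u1 u2 v1 v2 c : ℝ)

lemma dot_xx (h3 : u1^2+u2^2+3*c^2 = l3-l2) :
    ![u1,u2,c,c,c] ⬝ᵥ ![u1,u2,c,c,c] = l3 - l2 := by
  simp [dotProduct, Fin.sum_univ_five]; linear_combination h3

lemma dot_yy (h4 : v1^2+v2^2+3*c^2 = l2-l1) :
    ![v1,v2,c,c,c] ⬝ᵥ ![v1,v2,c,c,c] = l2 - l1 := by
  simp [dotProduct, Fin.sum_univ_five]; linear_combination h4

lemma dot_xy (h2 : u1*v1+u2*v2+3*c^2 = 0) :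
    ![u1,u2,c,c,c] ⬝ᵥ ![v1,v2,c,c,c] = 0 := by
  simp [dotProduct, Fin.sum_univ_five]; linear_combination h2

lemma dot_yx (h2 : u1*v1+u2*v2+3*c^2 = 0) :
    ![v1,v2,c,c,c] ⬝ᵥ ![u1,u2,c,c,c] = 0 := by
  simp [dotProduct, Fin.sum_univ_five]; linear_combination h2

end

section
variable {l1 l2 l3 u1 u2 v1 v2 c : ℝ}

lemma xne (hc : c ≠ 0) : (![u1,u2,c,c,c] : Fin 5 → ℝ) ≠ 0 := by
  intro h; exact hc (by simpa using congrFun h 2)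

lemma mult_l3 (h12 : l1 < l2) (h23 : l2 < l3)
    (h2 : u1*v1+u2*v2+3*c^2 = 0) (h3 : u1^2+u2^2+3*c^2 = l3-l2)
    (h4 : v1^2+v2^2+3*c^2 = l2-l1) (hc : c ≠ 0) :
    multOf (Amat l2 u1 u2 v1 v2 c) l3 = 1 := by
  have hxx := dot_xx l2 l3 u1 u2 c h3
  have hyy := dot_yy l1 l2 v1 v2 c h4
  have hxy := dot_xy u1 u2 v1 v2 c h2
  have hyx := dot_yx u1 u2 v1 v2 c h2
  have hker : LinearMap.ker (Amat l2 u1 u2 v1 v2 c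
      - l3 • (1 : Matrix (Fin 5) (Fin 5) ℝ)).mulVecLin
      = Submodule.span ℝ {![u1,u2,c,c,c]} := by
    apply le_antisymm
    · intro w hw
      rw [LinearMap.mem_ker, Matrix.mulVecLin_apply, Amat_mulVec] at hw
      have hyw : ![v1,v2,c,c,c] ⬝ᵥ w = 0 := by
        have h5 := congrArg (fun v => ![v1,v2,c,c,c] ⬝ᵥ v) hw
        simp only [dotProduct_add, dotProduct_sub, dotProduct_smul, smul_eq_mul,
          dotProduct_zero, hxy, hyx, hyy] at h5
        have h6 : (l1 - l3) * (![v1,v2,c,c,c] ⬝ᵥ w) = 0 := by linear_combination h5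
        rcases mul_eq_zero.1 h6 with h | h
        · exact absurd h (by intro h'; linarith)
        · exact h
      rw [Submodule.mem_span_singleton]
      refine ⟨(![u1,u2,c,c,c] ⬝ᵥ w) / (l3 - l2), ?_⟩
      have hne : l3 - l2 ≠ 0 := by intro h'; linarith
      funext i
      have h7 := congrFun hw i
      simp only [Pi.add_apply, Pi.sub_apply, Pi.smul_apply, smul_eq_mul,
        Pi.zero_apply, hyw, zero_mul] at h7 ⊢
      rw [div_mul_eq_mul_div, div_eq_iff hne]
      linear_combination h7
    · rw [Submodule.span_le, Set.singleton_subset_iff]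
      rw [SetLike.mem_coe, LinearMap.mem_ker, Matrix.mulVecLin_apply, Amat_mulVec,
        hxx, hyx]
      funext i
      simp only [Pi.add_apply, Pi.sub_apply, Pi.smul_apply, smul_eq_mul, Pi.zero_apply]
      ring
  rw [multOf, hker, finrank_span_singleton (xne hc)]
end

section
variable {l1 l2 l3 u1 u2 v1 v2 c : ℝ}

lemma mult_l1 (h12 : l1 < l2) (h23 : l2 < l3)
    (h2 : u1*v1+u2*v2+3*c^2 = 0) (h3 : u1^2+u2^2+3*c^2 = l3-l2)
    (h4 : v1^2+v2^2+3*c^2 = l2-l1) (hc : c ≠ 0) :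
    multOf (Amat l2 u1 u2 v1 v2 c) l1 = 1 := by
  have hxx := dot_xx l2 l3 u1 u2 c h3
  have hyy := dot_yy l1 l2 v1 v2 c h4
  have hxy := dot_xy u1 u2 v1 v2 c h2
  have hyx := dot_yx u1 u2 v1 v2 c h2
  have hker : LinearMap.ker (Amat l2 u1 u2 v1 v2 c
      - l1 • (1 : Matrix (Fin 5) (Fin 5) ℝ)).mulVecLin
      = Submodule.span ℝ {![v1,v2,c,c,c]} := by
    apply le_antisymm
    · intro w hw
      rw [LinearMap.mem_ker, Matrix.mulVecLin_apply, Amat_mulVec] at hw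
      have hxw : ![u1,u2,c,c,c] ⬝ᵥ w = 0 := by
        have h5 := congrArg (fun v => ![u1,u2,c,c,c] ⬝ᵥ v) hw
        simp only [dotProduct_add, dotProduct_sub, dotProduct_smul, smul_eq_mul,
          dotProduct_zero, hxy, hxx] at h5
        have h6 : (l3 - l1) * (![u1,u2,c,c,c] ⬝ᵥ w) = 0 := by linear_combination h5
        rcases mul_eq_zero.1 h6 with h | h
        · exact absurd h (by intro h'; linarith)
        · exact h
      rw [Submodule.mem_span_singleton]
      refine ⟨(![v1,v2,c,c,c] ⬝ᵥ w) / (l2 - l1), ?_⟩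
      have hne : l2 - l1 ≠ 0 := by intro h'; linarith
      funext i
      have h7 := congrFun hw i
      simp only [Pi.add_apply, Pi.sub_apply, Pi.smul_apply, smul_eq_mul,
        Pi.zero_apply, hxw, zero_mul] at h7 ⊢
      rw [div_mul_eq_mul_div, div_eq_iff hne]
      linear_combination -h7
    · rw [Submodule.span_le, Set.singleton_subset_iff]
      rw [SetLike.mem_coe, LinearMap.mem_ker, Matrix.mulVecLin_apply, Amat_mulVec,
        hyy, hxy]
      funext i
      simp only [Pi.add_apply, Pi.sub_apply, Pi.smul_apply, smul_eq_mul, Pi.zero_apply]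
      ring
  have yne : (![v1,v2,c,c,c] : Fin 5 → ℝ) ≠ 0 := by
    intro h; exact hc (by simpa using congrFun h 2)
  rw [multOf, hker, finrank_span_singleton yne]

lemma mult_other (h12 : l1 < l2) (h23 : l2 < l3)
    (h2 : u1*v1+u2*v2+3*c^2 = 0) (h3 : u1^2+u2^2+3*c^2 = l3-l2)
    (h4 : v1^2+v2^2+3*c^2 = l2-l1) (hc : c ≠ 0)
    (t : ℝ) (ht1 : t ≠ l1) (ht2 : t ≠ l2) (ht3 : t ≠ l3) :
    multOf (Amat l2 u1 u2 v1 v2 c) t = 0 := by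
  have hxx := dot_xx l2 l3 u1 u2 c h3
  have hyy := dot_yy l1 l2 v1 v2 c h4
  have hxy := dot_xy u1 u2 v1 v2 c h2
  have hyx := dot_yx u1 u2 v1 v2 c h2
  have hker : LinearMap.ker (Amat l2 u1 u2 v1 v2 c
      - t • (1 : Matrix (Fin 5) (Fin 5) ℝ)).mulVecLin = ⊥ := by
    rw [eq_bot_iff]
    intro w hw
    rw [LinearMap.mem_ker, Matrix.mulVecLin_apply, Amat_mulVec] at hw
    have hxw : ![u1,u2,c,c,c] ⬝ᵥ w = 0 := by
      have h5 := congrArg (fun v => ![u1,u2,c,c,c] ⬝ᵥ v) hw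
      simp only [dotProduct_add, dotProduct_sub, dotProduct_smul, smul_eq_mul,
        dotProduct_zero, hxy, hxx] at h5
      have h6 : (l3 - t) * (![u1,u2,c,c,c] ⬝ᵥ w) = 0 := by linear_combination h5
      rcases mul_eq_zero.1 h6 with h | h
      · exact absurd h (sub_ne_zero.mpr (Ne.symm ht3))
      · exact h
    have hyw : ![v1,v2,c,c,c] ⬝ᵥ w = 0 := by
      have h5 := congrArg (fun v => ![v1,v2,c,c,c] ⬝ᵥ v) hw
      simp only [dotProduct_add, dotProduct_sub, dotProduct_smul, smul_eq_mul,
        dotProduct_zero, hyx, hyy] at h5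
      have h6 : (l1 - t) * (![v1,v2,c,c,c] ⬝ᵥ w) = 0 := by linear_combination h5
      rcases mul_eq_zero.1 h6 with h | h
      · exact absurd h (sub_ne_zero.mpr (Ne.symm ht1))
      · exact h
    simp only [Submodule.mem_bot]
    funext i
    have h7 := congrFun hw i
    simp only [Pi.add_apply, Pi.sub_apply, Pi.smul_apply, smul_eq_mul,
      Pi.zero_apply, hxw, hyw, zero_mul] at h7
    have h8 : (l2 - t) * w i = 0 := by linear_combination h7
    rcases mul_eq_zero.1 h8 with h | h
    · exact absurd h (sub_ne_zero.mpr (Ne.symm ht2))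
    · exact h
  rw [multOf, hker, finrank_bot]

lemma mult_l2 (h12 : l1 < l2) (h23 : l2 < l3)
    (h2 : u1*v1+u2*v2+3*c^2 = 0) (h3 : u1^2+u2^2+3*c^2 = l3-l2)
    (h4 : v1^2+v2^2+3*c^2 = l2-l1) (hc : c ≠ 0) :
    multOf (Amat l2 u1 u2 v1 v2 c) l2 = 3 := by
  have hxx := dot_xx l2 l3 u1 u2 c h3
  have hyy := dot_yy l1 l2 v1 v2 c h4
  have hxy := dot_xy u1 u2 v1 v2 c h2
  have hyx := dot_yx u1 u2 v1 v2 c h2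
  set M : Matrix (Fin 2) (Fin 5) ℝ := Matrix.of ![![u1,u2,c,c,c], ![v1,v2,c,c,c]] with hM
  have hbeta : l3 - l2 ≠ 0 := by intro h'; linarith
  have halpha : l2 - l1 ≠ 0 := by intro h'; linarith
  have hMapp : ∀ w : Fin 5 → ℝ, M *ᵥ w = ![![u1,u2,c,c,c] ⬝ᵥ w, ![v1,v2,c,c,c] ⬝ᵥ w] := by
    intro w; funext i; fin_cases i <;> rfl
  have hker : LinearMap.ker (Amat l2 u1 u2 v1 v2 c
      - l2 • (1 : Matrix (Fin 5) (Fin 5) ℝ)).mulVecLin = LinearMap.ker M.mulVecLin := by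
    ext w
    rw [LinearMap.mem_ker, LinearMap.mem_ker, Matrix.mulVecLin_apply,
      Matrix.mulVecLin_apply, Amat_mulVec, hMapp]
    constructor
    · intro hw
      have hxw : ![u1,u2,c,c,c] ⬝ᵥ w = 0 := by
        have h5 := congrArg (fun v => ![u1,u2,c,c,c] ⬝ᵥ v) hw
        simp only [dotProduct_add, dotProduct_sub, dotProduct_smul, smul_eq_mul,
          dotProduct_zero, hxy, hxx] at h5
        have h6 : (l3 - l2) * (![u1,u2,c,c,c] ⬝ᵥ w) = 0 := by linear_combination h5
        rcases mul_eq_zero.1 h6 with h | h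
        · exact absurd h hbeta
        · exact h
      have hyw : ![v1,v2,c,c,c] ⬝ᵥ w = 0 := by
        have h5 := congrArg (fun v => ![v1,v2,c,c,c] ⬝ᵥ v) hw
        simp only [dotProduct_add, dotProduct_sub, dotProduct_smul, smul_eq_mul,
          dotProduct_zero, hyx, hyy] at h5
        have h6 : (l1 - l2) * (![v1,v2,c,c,c] ⬝ᵥ w) = 0 := by linear_combination h5
        rcases mul_eq_zero.1 h6 with h | h
        · exact absurd h (by intro h'; linarith)
        · exact h
      funext i; fin_cases i <;> simp [hxw, hyw]
    · intro hw
      have hxw : ![u1,u2,c,c,c] ⬝ᵥ w = 0 := by simpa using congrFun hw 0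
      have hyw : ![v1,v2,c,c,c] ⬝ᵥ w = 0 := by simpa using congrFun hw 1
      funext i
      simp [hxw, hyw]
  have hrange : LinearMap.range M.mulVecLin = ⊤ := by
    rw [LinearMap.range_eq_top]
    intro z
    refine ⟨(z 0 / (l3 - l2)) • ![u1,u2,c,c,c] + (z 1 / (l2 - l1)) • ![v1,v2,c,c,c], ?_⟩
    rw [Matrix.mulVecLin_apply, hMapp]
    funext i
    fin_cases i
    · simp [dotProduct_add, dotProduct_smul, hxx, hxy, hyx, hyy]
      field_simp
      linear_combination (z 0 * (l2-l1)) * h3 + (z 1 * (l3-l2)) * h2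
    · simp [dotProduct_add, dotProduct_smul, hxx, hxy, hyx, hyy]
      field_simp
      linear_combination (z 1 * (l3-l2)) * h4 + (z 0 * (l2-l1)) * h2
  have hrn := LinearMap.finrank_range_add_finrank_ker M.mulVecLin
  rw [hrange, finrank_top, Module.finrank_pi, Module.finrank_pi] at hrn
  simp only [Fintype.card_fin] at hrn
  rw [multOf, hker]
  omega
end


lemma construct (l1 l2 l3 : ℝ) (h12 : l1 < l2) (h23 : l2 < l3) :
    ∃ u1 u2 v1 v2 c : ℝ,
      u1*u2 = v1*v2 ∧ u1*v1+u2*v2+3*c^2 = 0 ∧ u1^2+u2^2+3*c^2 = l3-l2 ∧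
      v1^2+v2^2+3*c^2 = l2-l1 ∧ c ≠ 0 ∧ u1 ≠ v1 ∧ u2 ≠ v2 ∧
      (u1-v1)^2 ≠ (u2-v2)^2 := by
  have ha : (0:ℝ) < l2 - l1 := by linarith
  have hb : (0:ℝ) < l3 - l2 := by linarith
  by_cases hab : l2 - l1 = l3 - l2
  · -- symmetric case
    have e1 : Real.sqrt ((l3-l2)/6) ^ 2 = (l3-l2)/6 := Real.sq_sqrt (by positivity)
    have e2 : Real.sqrt ((l3-l2)/3) ^ 2 = (l3-l2)/3 := Real.sq_sqrt (by positivity)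
    have p1 : 0 < Real.sqrt ((l3-l2)/6) := Real.sqrt_pos.mpr (by positivity)
    have p2 : 0 < Real.sqrt ((l3-l2)/3) := Real.sqrt_pos.mpr (by positivity)
    refine ⟨Real.sqrt ((l3-l2)/6), Real.sqrt ((l3-l2)/3), -Real.sqrt ((l3-l2)/6),
      -Real.sqrt ((l3-l2)/3), Real.sqrt ((l3-l2)/6),
      by ring, ?_, ?_, ?_, ne_of_gt p1, ?_, ?_, ?_⟩
    · linear_combination 2*e1 - e2
    · linear_combination 4*e1 + e2
    · linear_combination 4*e1 + e2 - hab
    · intro h; nlinarith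
    · intro h; nlinarith
    · intro h; nlinarith
  · -- asymmetric case
    obtain ⟨t, ht1, hn1, hn2⟩ : ∃ t : ℝ, 1 < t ∧ 0 < (l2-l1)*t - (l3-l2)
        ∧ 0 < t*(l3-l2) - (l2-l1) := by
      refine ⟨1 + (l2-l1)/(l3-l2) + (l3-l2)/(l2-l1), by
        have h' : 0 < (l2-l1)/(l3-l2) + (l3-l2)/(l2-l1) := by positivity
        linarith, ?_, ?_⟩
      · have key : (l2-l1)*(1 + (l2-l1)/(l3-l2) + (l3-l2)/(l2-l1)) - (l3-l2)
            = (l2-l1) + (l2-l1)^2/(l3-l2) := by field_simp; ring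
        rw [key]; positivity
      · have key : (1 + (l2-l1)/(l3-l2) + (l3-l2)/(l2-l1))*(l3-l2) - (l2-l1)
            = (l3-l2) + (l3-l2)^2/(l2-l1) := by field_simp; ring
        rw [key]; positivity
    have ht0 : (0:ℝ) < t := by linarith
    have htp : (0:ℝ) < t + 1 := by linarith
    have hD : (0:ℝ) < (t-1)*(t+1)^2 := by
      have h' : (0:ℝ) < t - 1 := by linarith
      positivity
    obtain ⟨P, hP, R1⟩ : ∃ P : ℝ, 0 < P ∧ P * ((t-1)*(t+1)^2) = (l2-l1)*t - (l3-l2) :=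
      ⟨((l2-l1)*t - (l3-l2))/((t-1)*(t+1)^2), by positivity, by field_simp [sub_ne_zero.mpr ht1.ne']⟩
    obtain ⟨R, hR, R2⟩ : ∃ R : ℝ, 0 < R ∧ R * ((t-1)*(t+1)^2) = t*(l3-l2) - (l2-l1) :=
      ⟨(t*(l3-l2) - (l2-l1))/((t-1)*(t+1)^2), by positivity, by field_simp [sub_ne_zero.mpr ht1.ne']⟩
    have key3 : P + t^2*R + t*(P+R) = l3 - l2 :=
      mul_right_cancel₀ (ne_of_gt hD) (by linear_combination (1+t)*R1 + (t*(t+1))*R2)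
    have key4 : t^2*P + R + t*(P+R) = l2 - l1 :=
      mul_right_cancel₀ (ne_of_gt hD) (by linear_combination (t*(t+1))*R1 + (1+t)*R2)
    have keyPR : P ≠ R := by
      intro h
      have h0 : ((l2-l1) - (l3-l2))*(t+1) = (P - R)*((t-1)*(t+1)^2) := by
        linear_combination R2 - R1
      rw [h, sub_self, zero_mul] at h0
      have : (l2-l1) - (l3-l2) = 0 := by
        rcases mul_eq_zero.1 h0 with h' | h'
        · exact h'
        · linarith
      exact hab (by linarith)
    have eP : Real.sqrt P ^ 2 = P := Real.sq_sqrt hP.le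
    have eR : Real.sqrt R ^ 2 = R := Real.sq_sqrt hR.le
    have ec : Real.sqrt (t*(P+R)/3) ^ 2 = t*(P+R)/3 := Real.sq_sqrt (by positivity)
    have pP : 0 < Real.sqrt P := Real.sqrt_pos.mpr hP
    have pR : 0 < Real.sqrt R := Real.sqrt_pos.mpr hR
    have pc : 0 < Real.sqrt (t*(P+R)/3) := Real.sqrt_pos.mpr (by positivity)
    refine ⟨Real.sqrt P, t * Real.sqrt R, -t * Real.sqrt P, -Real.sqrt R,
      Real.sqrt (t*(P+R)/3), by ring, ?_, ?_, ?_, ne_of_gt pc, ?_, ?_, ?_⟩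
    · linear_combination (-t)*eP + (-t)*eR + 3*ec
    · linear_combination eP + t^2*eR + 3*ec + key3
    · linear_combination t^2*eP + eR + 3*ec + key4
    · intro h; nlinarith
    · intro h; nlinarith
    · intro h
      apply keyPR
      apply mul_left_cancel₀ (a := (1+t)^2) (by positivity)
      linear_combination h - (1+t)^2*eP + (1+t)^2*eR


/-- For all `λ₁ < λ₂ < λ₃` there is an SSP matrix in `S(K_{2,3})` with spectrum
`{λ₁, λ₂, λ₂, λ₂, λ₃}` (ordered multiplicity list `(1,3,1)`). -/
theorem k23_oml131_spectrally_arbitrary_SSP (l1 l2 l3 : ℝ)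
    (h12 : l1 < l2) (h23 : l2 < l3) :
    ∃ A : Matrix (Fin 5) (Fin 5) ℝ, InS bip23 A ∧ HasSSP A ∧
      multOf A l1 = 1 ∧ multOf A l2 = 3 ∧ multOf A l3 = 1 ∧
      ∀ t, t ≠ l1 → t ≠ l2 → t ≠ l3 → multOf A t = 0 := by
  obtain ⟨u1, u2, v1, v2, c, h1, h2, h3, h4, hc, hm0, hm1, hne⟩ :=
    construct l1 l2 l3 h12 h23
  refine ⟨Amat l2 u1 u2 v1 v2 c,
    ⟨Amat_isSymm l2 u1 u2 v1 v2 c, pattern l2 u1 u2 v1 v2 c h1 hc hm0 hm1⟩,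
    Amat_ssp l2 u1 u2 v1 v2 c hc hm0 hm1 hne,
    mult_l1 h12 h23 h2 h3 h4 hc,
    mult_l2 h12 h23 h2 h3 h4 hc,
    mult_l3 h12 h23 h2 h3 h4 hc,
    fun t ht1 ht2 ht3 => mult_other h12 h23 h2 h3 h4 hc t ht1 ht2 ht3⟩
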